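/- arXiv:2210.02720 — 4 statements merged into one kernel-verified Lean document; each statement's English description precedes it below -/
import Mathlib

section
/- Consider the flooding update θ_{t+1} = θ_t - η·sign(L(θ_t) - b)·∇L(θ_t). If L(θ_t) < b and L(θ_{t+1}) > b, then the two-step update satisfies θ_{t+2} = θ_t - η²·(∇L(θ_t + η∇L(θ_t)) - ∇L(θ_t))/η, i.e., it equals a forward finite-difference gradient-regularization step with ε = γ = η. -/
/-- Flooding update θ_{t+1} = θ_t - η·sign(L(θ_t) - b)·∇L(θ_t). If L(θ_t) < b and
L(θ_{t+1}) > b, the two-step update equals a forward finite-difference GR step with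
ε = γ = η: θ_{t+2} = θ_t - η²·(∇L(θ_t + η∇L(θ_t)) - ∇L(θ_t))/η. -/
theorem flooding_forward_fd (d : ℕ)
    (L : EuclideanSpace ℝ (Fin d) → ℝ) (hL : Differentiable ℝ L)
    (b η : ℝ) (hb : 0 < b) (hη : 0 < η)
    (θ0 θ1 θ2 : EuclideanSpace ℝ (Fin d))
    (h1 : θ1 = θ0 - (η * Real.sign (L θ0 - b)) • gradient L θ0)
    (h2 : θ2 = θ1 - (η * Real.sign (L θ1 - b)) • gradient L θ1)
    (hlow : L θ0 < b) (hhigh : b < L θ1) :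
    θ2 = θ0 - (η ^ 2) •
      (η⁻¹ • (gradient L (θ0 + η • gradient L θ0) - gradient L θ0)) := by
  have s0 : Real.sign (L θ0 - b) = -1 := Real.sign_of_neg (by linarith)
  have s1 : Real.sign (L θ1 - b) = 1 := Real.sign_of_pos (by linarith)
  rw [s0] at h1
  rw [s1] at h2
  have h1' : θ1 = θ0 + η • gradient L θ0 := by
    rw [h1]; rw [mul_neg_one, neg_smul, sub_neg_eq_add]
  subst h2 h1'
  rw [smul_smul]
  have : η ^ 2 * η⁻¹ = η := by field_simp
  rw [this, mul_one, smul_sub]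
  abel
end

section
/- Consider the flooding update θ_{t+1} = θ_t - η·sign(L(θ_t) - b)·∇L(θ_t). If L(θ_t) > b and L(θ_{t+1}) < b, then θ_{t+2} = θ_t - η²·(∇L(θ_t) - ∇L(θ_t - η∇L(θ_t)))/η, i.e., the two-step flooding update equals a backward finite-difference gradient-regularization step. -/
/-- Flooding update θ_{t+1} = θ_t - η·sign(L(θ_t) - b)·∇L(θ_t). If L(θ_t) > b and
L(θ_{t+1}) < b, the two-step update equals a backward finite-difference GR step:
θ_{t+2} = θ_t - η²·(∇L(θ_t) - ∇L(θ_t - η∇L(θ_t)))/η. -/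
theorem flooding_backward_fd (d : ℕ)
    (L : EuclideanSpace ℝ (Fin d) → ℝ) (hL : Differentiable ℝ L)
    (b η : ℝ) (hb : 0 < b) (hη : 0 < η)
    (θ0 θ1 θ2 : EuclideanSpace ℝ (Fin d))
    (h1 : θ1 = θ0 - (η * Real.sign (L θ0 - b)) • gradient L θ0)
    (h2 : θ2 = θ1 - (η * Real.sign (L θ1 - b)) • gradient L θ1)
    (hhigh : b < L θ0) (hlow : L θ1 < b) :
    θ2 = θ0 - (η ^ 2) •
      (η⁻¹ • (gradient L θ0 - gradient L (θ0 - η • gradient L θ0))) := by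
  have s0 : Real.sign (L θ0 - b) = 1 := Real.sign_of_pos (by linarith)
  have s1 : Real.sign (L θ1 - b) = -1 := Real.sign_of_neg (by linarith)
  rw [s0, mul_one] at h1
  rw [s1] at h2
  subst h1 h2
  rw [smul_smul]
  have : η ^ 2 * η⁻¹ = η := by field_simp
  rw [this, mul_neg_one, neg_smul, smul_sub]
  abel
end

section
/- Suppose w : ℝ≥0 → ℝᵈ satisfies the coordinate-wise linear ODE dw/dt = -(1/n)g(t) ∘ w(t) - (1/n)h(t) for given continuous vector functions g, h, where h(t) = (1/n)g*(t) ∘ w*(t) with w*(t) = w(t) + ε∇L(w(t)). Then in the diagonal linear network with GR flow dw/dt = -q₁∇L(w) - q₂∇L(w + ε∇L(w)), the solution has the closed form w(t) = α₀ ∘ exp(-(1/n)X̃ᵀ∫₀ᵗ(q₁r(s) + q₂r*(s))ds) ∘ exp(-(q₂ε/n²)∫₀ᵗ(X̃ᵀr*(s)) ∘ (X̃ᵀr(s))ds). -/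
open Matrix MeasureTheory


lemma ode_sol (f c : ℝ → ℝ) (hc : Continuous c)
    (hf : ∀ t, HasDerivAt f (-(c t) * f t) t) :
    ∀ t, f t = f 0 * Real.exp (-∫ s in (0:ℝ)..t, c s) := by
  set C : ℝ → ℝ := fun t => ∫ s in (0:ℝ)..t, c s with hC
  have hC' : ∀ t, HasDerivAt C (c t) t := fun t =>
    (hc.integral_hasStrictDerivAt 0 t).hasDerivAt
  have hg : ∀ t, HasDerivAt (fun t => f t * Real.exp (C t)) 0 t := by
    intro t
    have := (hf t).fun_mul ((hC' t).exp)
    exact this.congr_deriv (by ring)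
  have hconst : ∀ t, f t * Real.exp (C t) = f 0 * Real.exp (C 0) := by
    intro t
    have : (fun t => f t * Real.exp (C t)) t = (fun t => f t * Real.exp (C t)) 0 :=
      is_const_of_deriv_eq_zero (fun x => (hg x).differentiableAt)
        (fun x => (hg x).deriv) t 0
    simpa using this
  intro t
  have h0 : C 0 = 0 := intervalIntegral.integral_same
  have := hconst t
  rw [h0, Real.exp_zero, mul_one] at this
  calc f t = f t * Real.exp (C t) * Real.exp (-C t) := by
        rw [mul_assoc, ← Real.exp_add, add_neg_cancel, Real.exp_zero, mul_one]
    _ = f 0 * Real.exp (-C t) := by rw [this]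

/-- Closed-form solution of the diagonal-linear-network flow with
finite-difference GR, dw/dt = -q₁∇L(w) - q₂∇L(w + ε∇L(w)) with q₁ = 1 - γ/ε,
q₂ = γ/ε, stacked data matrix X̃, residuals r = X̃w² - y, r* = X̃(w*)² - y,
w* = w + ε∇L(w) where ∇L(w) = (1/n)(X̃ᵀr) ∘ w. Then
w(t) = α₀ ∘ exp(-(1/n)X̃ᵀ∫₀ᵗ(q₁r + q₂r*)) ∘ exp(-(q₂ε/n²)∫₀ᵗ(X̃ᵀr*) ∘ (X̃ᵀr)). -/
theorem dln_gr_flow_closed_form (n m : ℕ) (hn : 0 < n)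
    (Xt : Matrix (Fin n) (Fin m) ℝ) (y : Fin n → ℝ)
    (w wstar : ℝ → Fin m → ℝ) (r rstar : ℝ → Fin n → ℝ)
    (α0 : Fin m → ℝ) (ε γ q1 q2 : ℝ) (hε : ε ≠ 0)
    (hq1 : q1 = 1 - γ / ε) (hq2 : q2 = γ / ε)
    (hr : ∀ t, r t = Xt *ᵥ (fun i => (w t i) ^ 2) - y)
    (hwstar : ∀ t, ∀ i, wstar t i
      = w t i + (ε / (n:ℝ)) * (Xtᵀ *ᵥ r t) i * w t i)
    (hrstar : ∀ t, rstar t = Xt *ᵥ (fun i => (wstar t i) ^ 2) - y)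
    (hflow : ∀ t, ∀ i, HasDerivAt (fun s => w s i)
      (-(q1 / (n:ℝ)) * (Xtᵀ *ᵥ r t) i * w t i
        - (q2 / (n:ℝ)) * (Xtᵀ *ᵥ rstar t) i * wstar t i) t)
    (hinit : w 0 = α0) :
    ∀ t ≥ (0:ℝ), ∀ i, w t i = α0 i
      * Real.exp (-(1 / (n:ℝ)) *
          ∫ s in (0:ℝ)..t, (q1 * (Xtᵀ *ᵥ r s) i + q2 * (Xtᵀ *ᵥ rstar s) i))
      * Real.exp (-(q2 * ε / (n:ℝ) ^ 2) *
          ∫ s in (0:ℝ)..t, (Xtᵀ *ᵥ rstar s) i * (Xtᵀ *ᵥ r s) i) := by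
  have hn' : (n : ℝ) ≠ 0 := Nat.cast_ne_zero.mpr hn.ne'
  intro t ht i
  set A : ℝ → ℝ := fun s => (Xtᵀ *ᵥ r s) i with hA_def
  set B : ℝ → ℝ := fun s => (Xtᵀ *ᵥ rstar s) i with hB_def
  have hw : ∀ j, Continuous fun s => w s j := by
    intro j
    exact continuous_iff_continuousAt.mpr fun x => (hflow x j).continuousAt
  have hA : Continuous A := by
    have : A = fun s => ∑ j, Xtᵀ i j * ((∑ k, Xt j k * (w s k) ^ 2) - y j) := by
      funext s
      rw [hA_def]
      simp only [hr s, mulVec, dotProduct, Pi.sub_apply]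
    rw [this]
    apply continuous_finset_sum
    intro j _
    exact continuous_const.mul (((continuous_finset_sum _ fun k _ =>
      continuous_const.mul ((hw k).pow 2)).sub continuous_const))
  have hws : ∀ j, Continuous fun s => wstar s j := by
    intro j
    have : (fun s => wstar s j)
        = fun s => w s j + (ε / (n:ℝ)) * (Xtᵀ *ᵥ r s) j * w s j := by
      funext s; exact hwstar s j
    rw [this]
    have hAj : Continuous fun s => (Xtᵀ *ᵥ r s) j := by
      have : (fun s => (Xtᵀ *ᵥ r s) j)
          = fun s => ∑ k, Xtᵀ j k * ((∑ l, Xt k l * (w s l) ^ 2) - y k) := by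
        funext s
        simp only [hr s, mulVec, dotProduct, Pi.sub_apply]
      rw [this]
      apply continuous_finset_sum
      intro k _
      exact continuous_const.mul (((continuous_finset_sum _ fun l _ =>
        continuous_const.mul ((hw l).pow 2)).sub continuous_const))
    exact (hw j).add ((continuous_const.mul hAj).mul (hw j))
  have hB : Continuous B := by
    have : B = fun s => ∑ j, Xtᵀ i j * ((∑ k, Xt j k * (wstar s k) ^ 2) - y j) := by
      funext s
      rw [hB_def]
      simp only [hrstar s, mulVec, dotProduct, Pi.sub_apply]
    rw [this]
    apply continuous_finset_sum
    intro j _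
    exact continuous_const.mul (((continuous_finset_sum _ fun k _ =>
      continuous_const.mul ((hws k).pow 2)).sub continuous_const))
  set c : ℝ → ℝ := fun s =>
    (1 / (n:ℝ)) * (q1 * A s + q2 * B s) + (q2 * ε / (n:ℝ) ^ 2) * (B s * A s)
    with hc_def
  have hc : Continuous c := by
    apply Continuous.add
    · exact continuous_const.mul ((continuous_const.mul hA).add
        (continuous_const.mul hB))
    · exact continuous_const.mul (hB.mul hA)
  have hf' : ∀ s, HasDerivAt (fun u => w u i) (-(c s) * w s i) s := by
    intro s
    have h := hflow s i
    rw [hwstar s i] at h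
    convert h using 1
    rw [hc_def]
    simp only [hA_def, hB_def]
    field_simp
    ring
  have hsol := ode_sol (fun u => w u i) c hc hf' t
  rw [hinit] at hsol
  rw [hsol]
  have hI : (∫ s in (0:ℝ)..t, c s)
      = (1 / (n:ℝ)) * (∫ s in (0:ℝ)..t, (q1 * A s + q2 * B s))
        + (q2 * ε / (n:ℝ) ^ 2) * (∫ s in (0:ℝ)..t, B s * A s) := by
    rw [hc_def]
    rw [intervalIntegral.integral_add (f := fun s => 1 / (n:ℝ) * (q1 * A s + q2 * B s))
      (g := fun s => q2 * ε / (n:ℝ) ^ 2 * (B s * A s))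
      ((continuous_const.mul ((continuous_const.mul hA).add
        (continuous_const.mul hB))).intervalIntegrable 0 t)
      ((continuous_const.mul (hB.mul hA)).intervalIntegrable 0 t),
      intervalIntegral.integral_const_mul, intervalIntegral.integral_const_mul]
  rw [hI, neg_add, Real.exp_add, ← mul_assoc]
  simp only [hA_def, hB_def, neg_mul]
end

section
/- Let β_∞ = 2α² ∘ sinh(Xᵀν) for some ν ∈ ℝⁿ and α ∈ ℝᵈ with positive entries, and suppose Xβ_∞ = y. Then β_∞ is the unique minimizer of φ_α(β) = ∑ᵢ αᵢ² q(βᵢ/αᵢ²) over {β : Xβ = y}, where q(z) = 2 - √(4+z²) + z·arcsinh(z/2). -/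
open Matrix

noncomputable def Q (z : ℝ) : ℝ := 2 - Real.sqrt (4 + z^2) + z * Real.arsinh (z/2)

lemma Q_hasDerivAt (z : ℝ) : HasDerivAt Q (Real.arsinh (z/2)) z := by
  have hpos : (0:ℝ) < 4 + z^2 := by positivity
  have hs : Real.sqrt (1 + (z/2)^2) = Real.sqrt (4 + z^2) / 2 := by
    rw [show (1 + (z/2)^2) = (4 + z^2)/4 by ring, Real.sqrt_div hpos.le,
      show (4:ℝ) = 2^2 by norm_num, Real.sqrt_sq (by norm_num)]
  have hsqrt : HasDerivAt (fun z : ℝ => Real.sqrt (4 + z^2))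
      (1 / (2 * Real.sqrt (4 + z^2)) * (2 * z)) z := by
    have h1 : HasDerivAt (fun z : ℝ => 4 + z^2) (2 * z) z := by
      simpa using (hasDerivAt_pow 2 z).const_add 4
    exact (Real.hasDerivAt_sqrt hpos.ne').comp z h1
  have harsinh : HasDerivAt (fun z : ℝ => Real.arsinh (z/2))
      ((Real.sqrt (1 + (z/2)^2))⁻¹ * (1/2)) z := by
    have h0 := (Real.hasDerivAt_arsinh (z/2)).comp z ((hasDerivAt_id z).div_const 2)
    exact h0
  have h := ((hasDerivAt_const z (2:ℝ)).sub hsqrt).add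
    ((hasDerivAt_id z).mul harsinh)
  have hsne : Real.sqrt (4 + z^2) ≠ 0 := by positivity
  refine h.congr_deriv ?_
  rw [hs, id_eq]
  field_simp
  ring

lemma Q_tangent_le (a b : ℝ) : Q a + Real.arsinh (a/2) * (b - a) ≤ Q b := by
  set c := Real.arsinh (a/2) with hc
  have hg : ∀ t, HasDerivAt (fun t => Q t - c * t) (Real.arsinh (t/2) - c) t := by
    intro t
    exact ((Q_hasDerivAt t).sub ((hasDerivAt_id t).const_mul c)).congr_deriv (by simp)
  have hcont : Continuous fun t => Q t - c * t :=
    (continuous_iff_continuousAt.2 fun t => (hg t).continuousAt)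
  rcases lt_trichotomy a b with h | h | h
  · have hmono : StrictMonoOn (fun t => Q t - c * t) (Set.Icc a b) := by
      apply strictMonoOn_of_deriv_pos (convex_Icc a b) hcont.continuousOn
      intro t ht
      rw [interior_Icc] at ht
      rw [(hg t).deriv, hc, sub_pos]
      exact Real.arsinh_lt_arsinh.2 (by linarith [ht.1])
    have := hmono (Set.left_mem_Icc.2 h.le) (Set.right_mem_Icc.2 h.le) h
    dsimp only at this
    simp only [mul_sub]
    linarith
  · simp [h]
  · have hanti : StrictAntiOn (fun t => Q t - c * t) (Set.Icc b a) := by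
      apply strictAntiOn_of_deriv_neg (convex_Icc b a) hcont.continuousOn
      intro t ht
      rw [interior_Icc] at ht
      rw [(hg t).deriv, hc, sub_neg]
      exact Real.arsinh_lt_arsinh.2 (by linarith [ht.2])
    have := hanti (Set.left_mem_Icc.2 h.le) (Set.right_mem_Icc.2 h.le) h
    dsimp only at this
    simp only [mul_sub]
    linarith

lemma Q_tangent_lt (a b : ℝ) (hab : a ≠ b) :
    Q a + Real.arsinh (a/2) * (b - a) < Q b := by
  set c := Real.arsinh (a/2) with hc
  have hg : ∀ t, HasDerivAt (fun t => Q t - c * t) (Real.arsinh (t/2) - c) t := by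
    intro t
    exact ((Q_hasDerivAt t).sub ((hasDerivAt_id t).const_mul c)).congr_deriv (by simp)
  have hcont : Continuous fun t => Q t - c * t :=
    (continuous_iff_continuousAt.2 fun t => (hg t).continuousAt)
  rcases lt_trichotomy a b with h | h | h
  · have hmono : StrictMonoOn (fun t => Q t - c * t) (Set.Icc a b) := by
      apply strictMonoOn_of_deriv_pos (convex_Icc a b) hcont.continuousOn
      intro t ht
      rw [interior_Icc] at ht
      rw [(hg t).deriv, hc, sub_pos]
      exact Real.arsinh_lt_arsinh.2 (by linarith [ht.1])
    have := hmono (Set.left_mem_Icc.2 h.le) (Set.right_mem_Icc.2 h.le) h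
    dsimp only at this
    simp only [mul_sub]
    linarith
  · exact absurd h hab
  · have hanti : StrictAntiOn (fun t => Q t - c * t) (Set.Icc b a) := by
      apply strictAntiOn_of_deriv_neg (convex_Icc b a) hcont.continuousOn
      intro t ht
      rw [interior_Icc] at ht
      rw [(hg t).deriv, hc, sub_neg]
      exact Real.arsinh_lt_arsinh.2 (by linarith [ht.2])
    have := hanti (Set.left_mem_Icc.2 h.le) (Set.right_mem_Icc.2 h.le) h
    dsimp only at this
    simp only [mul_sub]
    linarith

/-- If β∞ = 2α² ∘ sinh(Xᵀν) for some ν ∈ ℝⁿ, α has positive entries, and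
Xβ∞ = y, then β∞ is the unique minimizer of φ_α(β) = ∑ᵢ αᵢ² q(βᵢ/αᵢ²) over
{β : Xβ = y}, where q(z) = 2 - √(4+z²) + z·arcsinh(z/2). -/
theorem dln_interpolation_minimizer (n d : ℕ)
    (X : Matrix (Fin n) (Fin d) ℝ) (y : Fin n → ℝ)
    (α : Fin d → ℝ) (hα : ∀ i, 0 < α i) (ν : Fin n → ℝ)
    (βinf : Fin d → ℝ)
    (hβ : βinf = fun i => 2 * (α i) ^ 2 * Real.sinh ((Xᵀ *ᵥ ν) i))
    (hinterp : X *ᵥ βinf = y) :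
    ∀ β : Fin d → ℝ, X *ᵥ β = y → β ≠ βinf →
      (∑ i, (α i) ^ 2 * (2 - Real.sqrt (4 + (βinf i / (α i) ^ 2) ^ 2)
          + (βinf i / (α i) ^ 2) * Real.arsinh (βinf i / (α i) ^ 2 / 2)))
      < ∑ i, (α i) ^ 2 * (2 - Real.sqrt (4 + (β i / (α i) ^ 2) ^ 2)
          + (β i / (α i) ^ 2) * Real.arsinh (β i / (α i) ^ 2 / 2)) := by
  intro β hXβ hne
  have hα2 : ∀ i, (α i) ^ 2 ≠ 0 := fun i => (pow_pos (hα i) 2).ne'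
  obtain ⟨j, hj⟩ : ∃ j, β j ≠ βinf j := by
    by_contra h
    push_neg at h
    exact hne (funext h)
  -- arsinh of the tangent point equals (Xᵀν)ᵢ
  have hc : ∀ i, Real.arsinh (βinf i / (α i) ^ 2 / 2) = (Xᵀ *ᵥ ν) i := by
    intro i
    have h1 : βinf i / (α i) ^ 2 / 2 = Real.sinh ((Xᵀ *ᵥ ν) i) := by
      rw [hβ]
      dsimp only
      rw [mul_comm 2 ((α i)^2), mul_assoc, mul_div_cancel_left₀ _ (hα2 i),
        mul_div_cancel_left₀ _ (two_ne_zero)]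
    rw [h1, Real.arsinh_sinh]
  -- per-coordinate inequalities
  have key_le : ∀ i, (α i) ^ 2 * Q (βinf i / (α i) ^ 2)
      + (Xᵀ *ᵥ ν) i * (β i - βinf i) ≤ (α i) ^ 2 * Q (β i / (α i) ^ 2) := by
    intro i
    have h := Q_tangent_le (βinf i / (α i) ^ 2) (β i / (α i) ^ 2)
    have h2 := mul_le_mul_of_nonneg_left h (sq_nonneg (α i))
    have h3 : (α i) ^ 2 * (β i / (α i) ^ 2 - βinf i / (α i) ^ 2)
        = β i - βinf i := by rw [← sub_div, ← mul_div_assoc, mul_div_cancel_left₀ _ (hα2 i)]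
    calc (α i) ^ 2 * Q (βinf i / (α i) ^ 2) + (Xᵀ *ᵥ ν) i * (β i - βinf i)
        = (α i) ^ 2 * (Q (βinf i / (α i) ^ 2)
          + Real.arsinh (βinf i / (α i) ^ 2 / 2)
            * (β i / (α i) ^ 2 - βinf i / (α i) ^ 2)) := by
          rw [← hc i, ← h3]; ring
      _ ≤ (α i) ^ 2 * Q (β i / (α i) ^ 2) := h2
  have key_lt : (α j) ^ 2 * Q (βinf j / (α j) ^ 2)
      + (Xᵀ *ᵥ ν) j * (β j - βinf j) < (α j) ^ 2 * Q (β j / (α j) ^ 2) := by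
    have hab : βinf j / (α j) ^ 2 ≠ β j / (α j) ^ 2 := by
      intro h
      rw [div_eq_div_iff (hα2 j) (hα2 j)] at h
      exact hj (mul_right_cancel₀ (hα2 j) h).symm
    have h := Q_tangent_lt (βinf j / (α j) ^ 2) (β j / (α j) ^ 2) hab
    have h2 := mul_lt_mul_of_pos_left h (pow_pos (hα j) 2)
    have h3 : (α j) ^ 2 * (β j / (α j) ^ 2 - βinf j / (α j) ^ 2)
        = β j - βinf j := by rw [← sub_div, ← mul_div_assoc, mul_div_cancel_left₀ _ (hα2 j)]
    calc (α j) ^ 2 * Q (βinf j / (α j) ^ 2) + (Xᵀ *ᵥ ν) j * (β j - βinf j)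
        = (α j) ^ 2 * (Q (βinf j / (α j) ^ 2)
          + Real.arsinh (βinf j / (α j) ^ 2 / 2)
            * (β j / (α j) ^ 2 - βinf j / (α j) ^ 2)) := by
          rw [← hc j, ← h3]; ring
      _ < (α j) ^ 2 * Q (β j / (α j) ^ 2) := h2
  -- the correction term sums to zero
  have hsum0 : ∑ i, (Xᵀ *ᵥ ν) i * (β i - βinf i) = 0 := by
    have h1 : ∑ i, (Xᵀ *ᵥ ν) i * (β i - βinf i) = (Xᵀ *ᵥ ν) ⬝ᵥ (β - βinf) := rfl
    rw [h1, Matrix.mulVec_transpose, ← Matrix.dotProduct_mulVec,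
      Matrix.mulVec_sub, hXβ, hinterp, sub_self, dotProduct_zero]
  have hsum := Finset.sum_lt_sum (f := fun i => (α i) ^ 2 * Q (βinf i / (α i) ^ 2)
      + (Xᵀ *ᵥ ν) i * (β i - βinf i))
    (g := fun i => (α i) ^ 2 * Q (β i / (α i) ^ 2))
    (fun i _ => key_le i) ⟨j, Finset.mem_univ j, key_lt⟩
  rw [Finset.sum_add_distrib, hsum0, add_zero] at hsum
  exact hsum
end
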